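/- Let 0 < R₁ < R₂, n ≥ 3, and let D = B₂' \ closure(B₁), where B₁ is the open ball of radius R₁ centered at the origin and B₂' is an open ball of radius R₂ with closure(B₁) ⊂ B₂'. Let Ω₀ be the annulus {x ∈ ℝⁿ : R₁ < |x| < R₂}. Then ∫_D |∇(1/R₁^{n-2} − 1/|x|^{n-2})|² dx ≤ ∫_{Ω₀} |∇(1/R₁^{n-2} − 1/|x|^{n-2})|² dx, i.e., ∫_D (n-2)²/|x|^{2(n-1)} dx ≤ ∫_{Ω₀} (n-2)²/|x|^{2(n-1)} dx, with equality if and only if D = Ω₀. -/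

import Mathlib

open MeasureTheory Metric

theorem stmt_7 (n : ℕ) (hn : 3 ≤ n) (R₁ R₂ : ℝ) (h1 : 0 < R₁) (h12 : R₁ < R₂)
    (c : EuclideanSpace ℝ (Fin n))
    (hsub : closure (Metric.ball (0 : EuclideanSpace ℝ (Fin n)) R₁) ⊆ Metric.ball c R₂) :
    (∫ x in Metric.ball c R₂ \ closure (Metric.ball (0 : EuclideanSpace ℝ (Fin n)) R₁),
        ((n:ℝ) - 2)^2 / ‖x‖ ^ (2*(n - 1))) ≤
      (∫ x in {x : EuclideanSpace ℝ (Fin n) | R₁ < ‖x‖ ∧ ‖x‖ < R₂},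
        ((n:ℝ) - 2)^2 / ‖x‖ ^ (2*(n - 1))) ∧
    ((∫ x in Metric.ball c R₂ \ closure (Metric.ball (0 : EuclideanSpace ℝ (Fin n)) R₁),
        ((n:ℝ) - 2)^2 / ‖x‖ ^ (2*(n - 1))) =
      (∫ x in {x : EuclideanSpace ℝ (Fin n) | R₁ < ‖x‖ ∧ ‖x‖ < R₂},
        ((n:ℝ) - 2)^2 / ‖x‖ ^ (2*(n - 1))) ↔
      Metric.ball c R₂ \ closure (Metric.ball (0 : EuclideanSpace ℝ (Fin n)) R₁) =
        {x : EuclideanSpace ℝ (Fin n) | R₁ < ‖x‖ ∧ ‖x‖ < R₂}) := by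
  have hclos : closure (Metric.ball (0 : EuclideanSpace ℝ (Fin n)) R₁)
      = closedBall (0 : EuclideanSpace ℝ (Fin n)) R₁ := closure_ball 0 h1.ne'
  rw [hclos] at hsub ⊢
  set D : Set (EuclideanSpace ℝ (Fin n)) := ball c R₂ \ closedBall 0 R₁ with hDdef
  set Ω : Set (EuclideanSpace ℝ (Fin n)) := {x | R₁ < ‖x‖ ∧ ‖x‖ < R₂} with hΩdef
  set f : EuclideanSpace ℝ (Fin n) → ℝ := fun x => ((n:ℝ) - 2)^2 / ‖x‖ ^ (2*(n - 1))
    with hfdef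
  have h3 : (3:ℝ) ≤ (n:ℝ) := by exact_mod_cast hn
  have hnum : (0:ℝ) < ((n:ℝ) - 2)^2 := pow_pos (by linarith) 2
  have hk : 2 * (n - 1) ≠ 0 := by omega
  set k : ℕ := 2 * (n - 1) with hkdef
  set m : ℝ := ((n:ℝ) - 2)^2 / R₂ ^ k with hmdef
  have h2 : (0:ℝ) < R₂ := h1.trans h12
  -- basic facts about f
  have hfmeas : Measurable f := measurable_const.div (measurable_norm.pow_const _)
  have hfnonneg : ∀ x, 0 ≤ f x := fun x =>
    div_nonneg hnum.le (pow_nonneg (norm_nonneg x) _)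
  -- measurability of sets
  have hΩeq : Ω = ball (0 : EuclideanSpace ℝ (Fin n)) R₂ \ closedBall 0 R₁ := by
    ext x
    simp only [hΩdef, Set.mem_setOf_eq, Set.mem_diff, mem_ball_zero_iff,
      mem_closedBall_zero_iff, not_le]
    tauto
  have hDmeas : MeasurableSet D := measurableSet_ball.diff measurableSet_closedBall
  have hΩmeas : MeasurableSet Ω := by
    rw [hΩeq]; exact measurableSet_ball.diff measurableSet_closedBall
  -- finiteness of measures
  have hDfin : volume D < ⊤ :=
    (measure_mono Set.diff_subset).trans_lt measure_ball_lt_top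
  have hΩfin : volume Ω < ⊤ := by
    rw [hΩeq]
    exact (measure_mono Set.diff_subset).trans_lt measure_ball_lt_top
  -- equal measures
  have hμeq : volume D = volume Ω := by
    rw [hΩeq, hDdef,
      measure_diff hsub measurableSet_closedBall.nullMeasurableSet
        measure_closedBall_lt_top.ne,
      measure_diff (closedBall_subset_ball h12)
        measurableSet_closedBall.nullMeasurableSet measure_closedBall_lt_top.ne,
      Measure.addHaar_ball_center]
  -- integrability
  have hbound : ∀ (S : Set (EuclideanSpace ℝ (Fin n))), MeasurableSet S →
      volume S < ⊤ → (∀ x ∈ S, R₁ ≤ ‖x‖) → IntegrableOn f S volume := by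
    intro S hSm hSfin hS
    refine Measure.integrableOn_of_bounded hSfin.ne hfmeas.aestronglyMeasurable
      (M := ((n:ℝ) - 2)^2 / R₁ ^ k) ?_
    filter_upwards [ae_restrict_mem hSm] with x hx
    rw [Real.norm_of_nonneg (hfnonneg x)]
    exact div_le_div_of_nonneg_left hnum.le (pow_pos h1 _)
      (pow_le_pow_left₀ h1.le (hS x hx) _)
  have hDsub : ∀ x ∈ D, R₁ ≤ ‖x‖ := by
    intro x hx
    have := hx.2
    rw [mem_closedBall_zero_iff] at this
    exact (not_le.mp this).le
  have hΩsub : ∀ x ∈ Ω, R₁ ≤ ‖x‖ := fun x hx => hx.1.le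
  have hIntD : IntegrableOn f D volume := hbound D hDmeas hDfin hDsub
  have hIntΩ : IntegrableOn f Ω volume := hbound Ω hΩmeas hΩfin hΩsub
  have hIntDΩ : IntegrableOn f (D ∩ Ω) volume := hIntD.mono_set Set.inter_subset_left
  have hIntDdiff : IntegrableOn f (D \ Ω) volume := hIntD.mono_set Set.diff_subset
  have hIntΩdiff : IntegrableOn f (Ω \ D) volume := hIntΩ.mono_set Set.diff_subset
  -- splits
  have hDsplit : ∫ x in D, f x = (∫ x in D ∩ Ω, f x) + ∫ x in D \ Ω, f x := by
    rw [← setIntegral_union (Set.disjoint_sdiff_right.mono_left Set.inter_subset_right)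
      (hDmeas.diff hΩmeas) hIntDΩ hIntDdiff, Set.inter_union_diff]
  have hΩsplit : ∫ x in Ω, f x = (∫ x in D ∩ Ω, f x) + ∫ x in Ω \ D, f x := by
    rw [Set.inter_comm D Ω,
      ← setIntegral_union (Set.disjoint_sdiff_right.mono_left Set.inter_subset_right)
      (hΩmeas.diff hDmeas) (hIntΩ.mono_set Set.inter_subset_left)
      hIntΩdiff, Set.inter_union_diff]
  -- equal measures of the differences
  have hdiffeq : volume (D \ Ω) = volume (Ω \ D) := by
    have e1 := measure_inter_add_diff (μ := volume) D hΩmeas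
    have e2 := measure_inter_add_diff (μ := volume) Ω hDmeas
    rw [Set.inter_comm] at e2
    have hfin : volume (D ∩ Ω) ≠ ⊤ :=
      ((measure_mono Set.inter_subset_left).trans_lt hDfin).ne
    rw [← ENNReal.add_right_inj hfin, e1, e2, hμeq]
  -- pointwise comparisons with the constant m
  have hle1 : ∫ x in D \ Ω, f x ≤ (volume (D \ Ω)).toReal * m := by
    have := setIntegral_mono_on hIntDdiff
      (integrableOn_const ((measure_mono Set.diff_subset).trans_lt hDfin).ne)
      (hDmeas.diff hΩmeas) (g := fun _ => m) ?_
    · simpa [setIntegral_const, smul_eq_mul, Measure.real] using this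
    · intro x hx
      have hx1 : R₁ < ‖x‖ := by
        have := hx.1.2
        simp only [mem_closedBall_zero_iff, not_le] at this
        exact this
      have hx2 : R₂ ≤ ‖x‖ := by
        by_contra hcon
        exact hx.2 ⟨hx1, not_le.mp hcon⟩
      exact div_le_div_of_nonneg_left hnum.le (pow_pos h2 _)
        (pow_le_pow_left₀ h2.le hx2 _)
  have hle2 : (volume (Ω \ D)).toReal * m ≤ ∫ x in Ω \ D, f x := by
    have := setIntegral_mono_on
      (integrableOn_const ((measure_mono Set.diff_subset).trans_lt hΩfin).ne)
      hIntΩdiff (hΩmeas.diff hDmeas) (f := fun _ => m) ?_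
    · simpa [setIntegral_const, smul_eq_mul, Measure.real] using this
    · intro x hx
      exact div_le_div_of_nonneg_left hnum.le
        (pow_pos (h1.trans hx.1.1) _) (pow_le_pow_left₀ (norm_nonneg x) hx.1.2.le _)
  have hmain : ∫ x in D, f x ≤ ∫ x in Ω, f x := by
    have htr : (volume (D \ Ω)).toReal = (volume (Ω \ D)).toReal := by rw [hdiffeq]
    rw [htr] at hle1
    rw [hDsplit, hΩsplit]
    linarith [hle1, hle2]
  -- strict inequality when D ≠ Ω
  have hkey : D ≠ Ω → ∫ x in D, f x < ∫ x in Ω, f x := by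
    intro hne
    have hc : c ≠ 0 := by
      rintro rfl
      exact hne hΩeq.symm
    have hc0 : (0:ℝ) < ‖c‖ := norm_pos_iff.mpr hc
    -- a nonempty open subset of Ω \ D
    set t : ℝ := (max R₁ (R₂ - ‖c‖) + R₂) / 2 with htdef
    have hmax : max R₁ (R₂ - ‖c‖) < R₂ := max_lt h12 (by linarith)
    have ht1 : max R₁ (R₂ - ‖c‖) < t := by rw [htdef]; linarith
    have ht2 : t < R₂ := by rw [htdef]; linarith
    have htR₁ : R₁ < t := (le_max_left _ _).trans_lt ht1
    have htc : R₂ - ‖c‖ < t := (le_max_right _ _).trans_lt ht1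
    have ht0 : 0 < t := h1.trans htR₁
    set x₀ : EuclideanSpace ℝ (Fin n) := (-(t / ‖c‖)) • c with hx₀def
    have hx₀norm : ‖x₀‖ = t := by
      rw [hx₀def, norm_smul, Real.norm_eq_abs, abs_neg, abs_of_pos (by positivity),
        div_mul_cancel₀ _ hc0.ne']
    have hx₀c : ‖x₀ - c‖ = t + ‖c‖ := by
      have h' : x₀ - c = ((-(t / ‖c‖)) - 1) • c := by
        rw [hx₀def, sub_smul, one_smul]
      have hneg : (-(t / ‖c‖)) - 1 < 0 := by
        have : 0 < t / ‖c‖ := by positivity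
        linarith
      rw [h', norm_smul, Real.norm_eq_abs, abs_of_neg hneg]
      field_simp
      ring
    set U : Set (EuclideanSpace ℝ (Fin n)) :=
      {x | R₂ < ‖x - c‖} ∩ ({x | R₁ < ‖x‖} ∩ {x | ‖x‖ < R₂}) with hUdef
    have hUopen : IsOpen U := by
      refine IsOpen.inter ?_ (IsOpen.inter ?_ ?_)
      · exact isOpen_lt continuous_const ((continuous_id.sub continuous_const).norm)
      · exact isOpen_lt continuous_const continuous_norm
      · exact isOpen_lt continuous_norm continuous_const
    have hx₀U : x₀ ∈ U := by
      refine ⟨?_, ?_, ?_⟩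
      · simp only [Set.mem_setOf_eq, hx₀c]; linarith
      · simp only [Set.mem_setOf_eq, hx₀norm]; exact htR₁
      · simp only [Set.mem_setOf_eq, hx₀norm]; exact ht2
    have hUsub : U ⊆ Ω \ D := by
      intro x hx
      refine ⟨⟨hx.2.1, hx.2.2⟩, ?_⟩
      intro hxD
      have : dist x c < R₂ := mem_ball.mp hxD.1
      rw [dist_eq_norm] at this
      exact absurd hx.1 (not_lt.mpr this.le)
    have hpos : 0 < volume (Ω \ D) :=
      (hUopen.measure_pos volume ⟨x₀, hx₀U⟩).trans_le (measure_mono hUsub)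
    have hfinΩD : volume (Ω \ D) < ⊤ := (measure_mono Set.diff_subset).trans_lt hΩfin
    have htRpos : 0 < (volume (Ω \ D)).toReal := ENNReal.toReal_pos hpos.ne' hfinΩD.ne
    -- strict comparison on Ω \ D
    have hstrict : (volume (Ω \ D)).toReal * m < ∫ x in Ω \ D, f x := by
      set g : EuclideanSpace ℝ (Fin n) → ℝ := fun x => f x - m with hgdef
      have hgpos : ∀ x ∈ Ω \ D, 0 < g x := by
        intro x hx
        have hxlt : ‖x‖ < R₂ := hx.1.2
        have : m < f x :=
          div_lt_div_of_pos_left hnum (pow_pos (h1.trans hx.1.1) _)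
            (pow_lt_pow_left₀ hxlt (norm_nonneg x) hk)
        simpa [hgdef] using sub_pos.mpr this
      have hIntg : IntegrableOn g (Ω \ D) volume :=
        hIntΩdiff.sub (integrableOn_const hfinΩD.ne)
      have hgint : 0 < ∫ x in Ω \ D, g x := by
        rw [setIntegral_pos_iff_support_of_nonneg_ae ?_ hIntg]
        · exact hpos.trans_le (measure_mono fun x hx => ⟨(hgpos x hx).ne', hx⟩)
        · filter_upwards [ae_restrict_mem (hΩmeas.diff hDmeas)] with x hx
          exact (hgpos x hx).le
      have hsplitg : ∫ x in Ω \ D, g x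
          = (∫ x in Ω \ D, f x) - (volume (Ω \ D)).toReal * m := by
        rw [hgdef]
        rw [integral_sub hIntΩdiff (integrableOn_const hfinΩD.ne)]
        simp [setIntegral_const, smul_eq_mul, Measure.real]
      linarith [hgint, hsplitg ▸ hgint]
    have htr : (volume (D \ Ω)).toReal = (volume (Ω \ D)).toReal := by rw [hdiffeq]
    rw [htr] at hle1
    rw [hDsplit, hΩsplit]
    linarith [hle1, hstrict]
  refine ⟨hmain, ?_, fun h => by rw [h]⟩
  intro h
  by_contra hne
  exact absurd h (ne_of_lt (hkey hne))
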